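/- arXiv:1901.10453 — 2 statements merged into one kernel-verified Lean document; each statement's English description precedes it below -/
import Mathlib

section
/- Let M be a colexicographically sorted list of distinct equal-length strings over an alphabet in which the dummy symbol $ is the smallest. If a string u occurs both as a suffix of some row of M and padded with $'s on the left as a full row (a 'linker' row), then the linker row is the first (smallest-index) row in the contiguous range of rows suffixed by u. -/
/-- The alphabet {$,a,c,g,t} encoded as `Fin 5`, with `$` = 0 the smallest. -/
abbrev DnaSym := Fin 5

/-- The dummy symbol `$`. -/
def dollar : DnaSym := 0

/-- Colexicographic (right-to-left) strict order on strings. -/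
def DnaColex (s t : List DnaSym) : Prop := List.Lex (· < ·) s.reverse t.reverse

lemma lex_append_cancel (p : List DnaSym) :
    ∀ a b : List DnaSym, List.Lex (· < ·) (p ++ a) (p ++ b) → List.Lex (· < ·) a b := by
  induction p with
  | nil => intro a b h; simpa using h
  | cons x xs ih =>
    intro a b h
    cases h with
    | rel h => exact absurd h (lt_irrefl x)
    | cons h => exact ih a b h

lemma not_lex_replicate (l : List DnaSym) :
    ¬ List.Lex (· < ·) l (List.replicate l.length (0 : DnaSym)) := by
  induction l with
  | nil => intro h; cases h
  | cons x xs ih =>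
    intro h
    simp only [List.length_cons, List.replicate_succ] at h
    cases h with
    | rel h => exact absurd h (Nat.not_lt_zero _)
    | cons h => exact ih h

/-- core of Lemma 1: in a colexicographically sorted matrix `M`
of distinct equal-length strings (strict sortedness gives distinctness), if the
linker row `$^j · u` (with `j ≥ 1`) occurs as row `i` of `M`, then `i` is the
smallest index of a row suffixed by `u`. -/
theorem linker_is_first_in_range
    (M : List (List DnaSym)) (n : ℕ)
    (hsorted : M.Pairwise DnaColex)
    (hlen : ∀ x ∈ M, x.length = n)
    (u : List DnaSym) (j : ℕ) (hj : 1 ≤ j)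
    (i : ℕ) (hi : i < M.length)
    (hlinker : M.get ⟨i, hi⟩ = List.replicate j dollar ++ u) :
    ∀ (i' : ℕ) (hi' : i' < M.length), u <:+ M.get ⟨i', hi'⟩ → i ≤ i' := by
  intro i' hi' hsuf
  by_contra hlt
  push_neg at hlt
  obtain ⟨w, hw⟩ := hsuf
  have hcolex : DnaColex (M.get ⟨i', hi'⟩) (M.get ⟨i, hi⟩) :=
    List.Pairwise.rel_get_of_lt hsorted hlt
  rw [← hw, hlinker] at hcolex
  unfold DnaColex at hcolex
  rw [List.reverse_append, List.reverse_append, List.reverse_replicate] at hcolex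
  have hlex := lex_append_cancel _ _ _ hcolex
  have hwi : w.length = j := by
    have h1 : (w ++ u).length = n := by
      rw [hw]; exact hlen _ (List.get_mem M _)
    have h2 : (List.replicate j dollar ++ u).length = n := by
      rw [← hlinker]; exact hlen _ (List.get_mem M _)
    simp only [List.length_append, List.length_replicate] at h1 h2
    omega
  have := not_lex_replicate w.reverse
  rw [List.length_reverse, hwi] at this
  exact this hlex
end

section
/- Let v be a row (string) in a colexicographically sorted matrix M of distinct equal-length strings over {$,a,c,g,t} with $ smallest, where $ only occurs in left-padding prefixes. A proper suffix u of v of length d < |v| corresponds to a forward-overlap candidate (i.e., u occurs as a prefix of some read) if and only if the first row of range(u) is a linker row $^{|v|−d}·u contained by v. -/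
lemma lex_append_left {r : DnaSym → DnaSym → Prop} (a : List DnaSym) {b c : List DnaSym}
    (h : List.Lex r b c) : List.Lex r (a ++ b) (a ++ c) := by
  induction a with
  | nil => exact h
  | cons x xs ih => exact List.Lex.cons ih

lemma replicate_dollar_min (m : ℕ) (b : List DnaSym) (hb : b.length = m) :
    b = List.replicate m dollar ∨ List.Lex (· < ·) (List.replicate m dollar) b := by
  induction m generalizing b with
  | zero => left; simpa [List.length_eq_zero_iff] using hb
  | succ k ih =>
    cases b with
    | nil => simp at hb
    | cons x xs =>
      simp at hb
      rcases eq_or_ne x dollar with hx | hx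
      · rcases ih xs hb with h | h
        · left; simp [hx, h, List.replicate_succ]
        · right; rw [List.replicate_succ, hx]; exact List.Lex.cons h
      · right
        rw [List.replicate_succ]
        exact List.Lex.rel (lt_of_le_of_ne (Fin.zero_le x) (Ne.symm hx))

lemma linker_least {u x : List DnaSym} {m : ℕ} (hx : x.length = m + u.length)
    (hsuf : u <:+ x) : x = List.replicate m dollar ++ u ∨
      DnaColex (List.replicate m dollar ++ u) x := by
  obtain ⟨y, rfl⟩ := hsuf
  have hy : y.reverse.length = m := by simpa using hx
  rcases replicate_dollar_min m y.reverse hy with h | h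
  · left
    have : y = List.replicate m dollar := by
      rw [← List.reverse_reverse y, h, List.reverse_replicate]
    rw [this]
  · right
    unfold DnaColex
    rw [List.reverse_append, List.reverse_append, List.reverse_replicate]
    exact lex_append_left _ h

lemma colex_asymm {a b : List DnaSym} (h1 : DnaColex a b) (h2 : DnaColex b a) : False :=
  asymm_of (List.Lex (· < ·) : List DnaSym → List DnaSym → Prop) h1 h2


/-- Lemma 1: let `M` be the colexicographically sorted matrix of
the `n`-length node labels, where prefixes of reads of length `d < n` are
represented as linker rows `$^{n-d}·u` (hypothesis `hlinkers` states this
characterization).  Let `v` be a row of `M` and `u` its suffix of length `d`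
(`d < n`).  Then `u` occurs as a prefix of some read iff the first row of
`range(u)` (the contiguous interval of rows suffixed by `u`) is the linker row
`$^{n-d}·u` contained by `v`. -/
theorem shorter_gives_overlap_iff_linker_first
    (Reads : Set (List DnaSym))
    (M : List (List DnaSym)) (n : ℕ)
    (hsorted : M.Pairwise DnaColex)
    (hlen : ∀ x ∈ M, x.length = n)
    (v : List DnaSym) (hv : v ∈ M)
    (d : ℕ) (hd1 : 1 ≤ d) (hdn : d < n)
    (u : List DnaSym) (hu : u = v.drop (n - d))
    (hlinkers : (List.replicate (n - d) dollar ++ u) ∈ M ↔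
      ∃ R ∈ Reads, u <+: R) :
    (∃ R ∈ Reads, u <+: R) ↔
      ∃ (i : ℕ) (hi : i < M.length),
        M.get ⟨i, hi⟩ = List.replicate (n - d) dollar ++ u ∧
        u <:+ v ∧
        ∀ (i' : ℕ) (hi' : i' < M.length), u <:+ M.get ⟨i', hi'⟩ → i ≤ i' := by
  have huv : u <:+ v := hu ▸ List.drop_suffix _ _
  have hulen : u.length = d := by
    rw [hu, List.length_drop, hlen v hv]
    omega
  set w := List.replicate (n - d) dollar ++ u with hw
  constructor
  · intro hread
    have hwM : w ∈ M := hlinkers.mpr hread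
    obtain ⟨⟨j, hj⟩, hjw⟩ := List.mem_iff_get.mp hwM
    -- take the least index whose row has suffix u
    classical
    have hP : ∃ i, ∃ hi : i < M.length, u <:+ M.get ⟨i, hi⟩ := by
      exact ⟨j, hj, by rw [hjw]; exact List.suffix_append _ _⟩
    set i := Nat.find hP with hidef
    obtain ⟨hi, hsuf⟩ := Nat.find_spec hP
    have hmin : ∀ (i' : ℕ) (hi' : i' < M.length), u <:+ M.get ⟨i', hi'⟩ → i ≤ i' :=
      fun i' hi' hs => Nat.find_min' hP ⟨hi', hs⟩
    refine ⟨i, hi, ?_, huv, hmin⟩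
    have hxlen : (M.get ⟨i, hi⟩).length = (n - d) + u.length := by
      rw [hlen _ (List.get_mem M ⟨i, hi⟩), hulen]; omega
    rcases linker_least hxlen hsuf with h | h
    · exact h
    · -- M.get i strictly greater colex than w = M.get j, so j < i, contradicting minimality
      exfalso
      have hij : i ≤ j := hmin j hj (by rw [hjw]; exact List.suffix_append _ _)
      rcases lt_or_eq_of_le hij with hlt | heq
      · have h2 : DnaColex (M.get ⟨i, hi⟩) (M.get ⟨j, hj⟩) := hsorted.rel_get_of_lt hlt
        rw [hjw, hw] at h2
        exact colex_asymm h h2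
      · have h3 : M.get ⟨i, hi⟩ = w := by subst heq; exact hjw
        rw [h3, hw] at h
        exact colex_asymm h h
  · rintro ⟨i, hi, hget, -, -⟩
    exact hlinkers.mp (hget ▸ List.get_mem M ⟨i, hi⟩)
end
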